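/- If a reduced word u is left-absorbed by the concatenation v_1·v_2, then u ≈ u_1·u_2 where u_1 is left-absorbed by v_1, u_2 is left-absorbed by v_2, and u_2 commutes with v_1 (hence also with u_1). -/

import Mathlib

variable {V : Type*} [DecidableEq V] [Fintype V]

/-- A letter is a nonempty connected subset of the graph `G`
(connectedness of the induced subgraph includes nonemptiness). -/
def IsLetter (G : SimpleGraph V) (s : Finset V) : Prop :=
  (G.induce (↑s : Set V)).Connected

/-- The type of letters of `G`. -/
def Letter (G : SimpleGraph V) := {s : Finset V // IsLetter G s}

/-- A word is a finite sequence of letters. -/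
abbrev Word (G : SimpleGraph V) := List (Letter G)

/-- Two letters commute iff their union is not a letter (is disconnected). -/
def LCommute (G : SimpleGraph V) (s t : Letter G) : Prop :=
  ¬ IsLetter G (s.1 ∪ t.1)

/-- Two words commute if their letters pairwise commute. -/
def WCommute (G : SimpleGraph V) (u v : Word G) : Prop :=
  ∀ s ∈ u, ∀ t ∈ v, LCommute G s t

/-- One swap of two adjacent commuting letters. -/
def LSwapStep (G : SimpleGraph V) (w w' : Word G) : Prop :=
  ∃ (a b : Word G) (s t : Letter G), LCommute G s t ∧
    w = a ++ s :: t :: b ∧ w' = a ++ t :: s :: b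

/-- Equivalence (`≈`) of words: sequences of swaps of adjacent commuting letters. -/
def WEquiv (G : SimpleGraph V) : Word G → Word G → Prop :=
  Relation.ReflTransGen (LSwapStep G)

/-- A word is reduced if there is no pair of comparable letters such that the
smaller one commutes with all letters strictly in between. -/
def WIsReduced (G : SimpleGraph V) (w : Word G) : Prop :=
  ¬ ∃ (a b c : Word G) (s t : Letter G),
      w = a ++ s :: (b ++ t :: c) ∧
      ((s.1 ⊆ t.1 ∧ ∀ r ∈ b, LCommute G s r) ∨
       (t.1 ⊆ s.1 ∧ ∀ r ∈ b, LCommute G t r))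

/-- A splitting of a letter `s`: a (possibly empty) word whose letters are
proper subsets of `s`. -/
def IsSplitting (G : SimpleGraph V) (x : Word G) (s : Letter G) : Prop :=
  ∀ t ∈ x, t.1 ⊂ s.1

/-- `SplitStep G u v`: `u` is obtained from `v` by replacing one occurrence of a
letter by a splitting of it. -/
def SplitStep (G : SimpleGraph V) (u v : Word G) : Prop :=
  ∃ (a b x : Word G) (s : Letter G),
    v = a ++ s :: b ∧ IsSplitting G x s ∧ u = a ++ x ++ b

/-- One step of the splitting order up to equivalence. -/
def PrecStep (G : SimpleGraph V) (u v : Word G) : Prop :=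
  ∃ u' v', WEquiv G v v' ∧ SplitStep G u' v' ∧ WEquiv G u u'

/-- The splitting order `≺` on words. -/
def WPrec (G : SimpleGraph V) : Word G → Word G → Prop :=
  Relation.TransGen (PrecStep G)

/-- `u ≼ v` : `u ≺ v` or `u ≈ v`. -/
def WPreceq (G : SimpleGraph V) (u v : Word G) : Prop :=
  WPrec G u v ∨ WEquiv G u v

/-- Absorption: if `s ⊆ t`, replace a subword `s·t` (or `t·s`) by `t`. -/
def AbsorbStep (G : SimpleGraph V) (w w' : Word G) : Prop :=
  ∃ (a b : Word G) (s t : Letter G), s.1 ⊆ t.1 ∧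
    (w = a ++ s :: t :: b ∨ w = a ++ t :: s :: b) ∧ w' = a ++ t :: b

/-- A non-splitting reduction step: Commutation or Absorption. -/
def NSStep (G : SimpleGraph V) (w w' : Word G) : Prop :=
  LSwapStep G w w' ∨ AbsorbStep G w w'

/-- `NSRed G u v`: `v` is a non-splitting reduction of `u`, i.e. a reduced word
obtained from `u` by Commutation and Absorption steps only. -/
def NSRed (G : SimpleGraph V) (u v : Word G) : Prop :=
  Relation.ReflTransGen (NSStep G) u v ∧ WIsReduced G v

/-- The letter `t` is left-absorbed by the word `w`: `t` is contained in some
letter of `w` and commutes with all earlier letters. -/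
def LetterLeftAbsorbed (G : SimpleGraph V) (t : Letter G) (w : Word G) : Prop :=
  ∃ (a b : Word G) (s : Letter G), w = a ++ s :: b ∧ t.1 ⊆ s.1 ∧ ∀ r ∈ a, LCommute G t r

/-- The letter `t` is right-absorbed by the word `w`. -/
def LetterRightAbsorbed (G : SimpleGraph V) (t : Letter G) (w : Word G) : Prop :=
  ∃ (a b : Word G) (s : Letter G), w = a ++ s :: b ∧ t.1 ⊆ s.1 ∧ ∀ r ∈ b, LCommute G t r

/-- The letter `t` is properly left-absorbed by the word `w`. -/
def LetterProperLeftAbsorbed (G : SimpleGraph V) (t : Letter G) (w : Word G) : Prop :=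
  ∃ (a b : Word G) (s : Letter G), w = a ++ s :: b ∧ t.1 ⊂ s.1 ∧ ∀ r ∈ a, LCommute G t r

/-- The letter `t` is properly right-absorbed by the word `w`. -/
def LetterProperRightAbsorbed (G : SimpleGraph V) (t : Letter G) (w : Word G) : Prop :=
  ∃ (a b : Word G) (s : Letter G), w = a ++ s :: b ∧ t.1 ⊂ s.1 ∧ ∀ r ∈ b, LCommute G t r

/-- A word `u` is left-absorbed by `w` if each of its letters is. -/
def LeftAbsorbed (G : SimpleGraph V) (u w : Word G) : Prop :=
  ∀ t ∈ u, LetterLeftAbsorbed G t w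

/-- A word `u` is right-absorbed by `w` if each of its letters is. -/
def RightAbsorbed (G : SimpleGraph V) (u w : Word G) : Prop :=
  ∀ t ∈ u, LetterRightAbsorbed G t w

/-- A word `u` is properly left-absorbed by `w` if each of its letters is. -/
def ProperLeftAbsorbed (G : SimpleGraph V) (u w : Word G) : Prop :=
  ∀ t ∈ u, LetterProperLeftAbsorbed G t w

/-- A word `u` is properly right-absorbed by `w` if each of its letters is. -/
def ProperRightAbsorbed (G : SimpleGraph V) (u w : Word G) : Prop :=
  ∀ t ∈ u, LetterProperRightAbsorbed G t w

/-- A commuting word: its letters pairwise commute. -/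
def IsCommuting (G : SimpleGraph V) (u : Word G) : Prop :=
  List.Pairwise (LCommute G) u

/-- The letter `s` is an end of the word `u` if `u ≈ v·s` for some `v`. -/
def IsEnd (G : SimpleGraph V) (s : Letter G) (u : Word G) : Prop :=
  ∃ v, WEquiv G u (v ++ [s])

/-- `t` is the final segment of `u`: the commuting word consisting of all ends of `u`. -/
def IsFinalSegment (G : SimpleGraph V) (t u : Word G) : Prop :=
  IsCommuting G t ∧ ∀ s, s ∈ t ↔ IsEnd G s u


section Aux

variable {G : SimpleGraph V}

lemma isLetter_nonempty {s : Finset V} (h : IsLetter G s) : ∃ x, x ∈ s := by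
  obtain ⟨⟨x, hx⟩⟩ := (h : (G.induce (↑s : Set V)).Connected).nonempty
  exact ⟨x, by exact_mod_cast hx⟩

lemma isLetter_union_of_subset {s t c : Finset V} (hs : IsLetter G s) (hc : IsLetter G c)
    (hcs : c ⊆ s) (hct : IsLetter G (c ∪ t)) : IsLetter G (s ∪ t) := by
  obtain ⟨x, hx⟩ := isLetter_nonempty hc
  have hcs' : (↑c : Set V) ⊆ ↑s := by exact_mod_cast hcs
  have hset : ((s ∪ t : Finset V) : Set V) = (↑s : Set V) ∪ (↑(c ∪ t) : Set V) := by
    have h2 : (↑s : Set V) ∪ ↑c = ↑s := Set.union_eq_left.mpr hcs'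
    push_cast
    rw [← Set.union_assoc, h2]
  show (G.induce _).Connected
  rw [hset]
  refine SimpleGraph.induce_union_connected (SimpleGraph.Connected.preconnected hs) (SimpleGraph.Connected.preconnected hct) ⟨x, ?_, ?_⟩
  · exact hcs' (by exact_mod_cast hx)
  · exact_mod_cast Finset.mem_union_left t hx

lemma lcommute_symm {s t : Letter G} (h : LCommute G s t) : LCommute G t s := by
  unfold LCommute at *
  rwa [Finset.union_comm]

lemma lswapStep_cons {u v : Word G} (t : Letter G) (h : LSwapStep G u v) :
    LSwapStep G (t :: u) (t :: v) := by
  obtain ⟨a, b, s, r, hc, h1, h2⟩ := h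
  exact ⟨t :: a, b, s, r, hc, by simp [h1], by simp [h2]⟩

lemma lcommute_of_subset {s t c : Letter G} (h : LCommute G s t) (hcs : c.1 ⊆ s.1) :
    LCommute G c t := fun hct => h (isLetter_union_of_subset s.2 c.2 hcs hct)

lemma wequiv_cons {u v : Word G} (t : Letter G) (h : WEquiv G u v) :
    WEquiv G (t :: u) (t :: v) :=
  h.lift (t :: ·) (fun _ _ => lswapStep_cons t)

lemma wequiv_move {t : Letter G} : ∀ (a : Word G) (b : Word G),
    (∀ r ∈ a, LCommute G t r) → WEquiv G (t :: (a ++ b)) (a ++ t :: b) := by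
  intro a
  induction a with
  | nil => intro b _; exact Relation.ReflTransGen.refl
  | cons r a ih =>
    intro b hc
    refine Relation.ReflTransGen.head ?_
      (wequiv_cons r (ih b fun x hx => hc x (List.mem_cons_of_mem _ hx)))
    exact ⟨[], a ++ b, t, r, hc r (List.mem_cons_self), rfl, rfl⟩

lemma letterLeftAbsorbed_append {t : Letter G} {v1 v2 : Word G}
    (h : LetterLeftAbsorbed G t (v1 ++ v2)) :
    LetterLeftAbsorbed G t v1 ∨
      (LetterLeftAbsorbed G t v2 ∧ ∀ r ∈ v1, LCommute G t r) := by
  obtain ⟨a, b, s, heq, hsub, hcomm⟩ := h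
  rcases List.append_eq_append_iff.mp heq with ⟨w, hw1, hw2⟩ | ⟨w, hw1, hw2⟩
  · -- a = v1 ++ w, v2 = w ++ s :: b
    right
    refine ⟨⟨w, b, s, hw2, hsub, fun r hr => hcomm r (hw1 ▸ List.mem_append_right _ hr)⟩, ?_⟩
    intro r hr
    exact hcomm r (hw1 ▸ List.mem_append_left _ hr)
  · -- v1 = a ++ w, s :: b = w ++ v2
    cases w with
    | nil =>
      simp only [List.append_nil] at hw1
      right
      refine ⟨⟨[], b, s, by simp [hw2], hsub, by simp⟩, ?_⟩
      intro r hr; exact hcomm r (hw1 ▸ hr)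
    | cons x w =>
      left
      have hx : s = x := (List.cons_eq_cons.mp hw2).1
      exact ⟨a, w, s, by rw [hw1, ← hx], hsub, hcomm⟩

lemma leftAbsorbed_decomp_aux (G : SimpleGraph V) (v1 v2 : Word G) :
    ∀ u : Word G, LeftAbsorbed G u (v1 ++ v2) →
    ∃ u1 u2 : Word G, WEquiv G u (u1 ++ u2) ∧
      LeftAbsorbed G u1 v1 ∧ LeftAbsorbed G u2 v2 ∧
      WCommute G u2 v1 ∧ WCommute G u2 u1 := by
  intro u
  induction u with
  | nil =>
    intro _
    exact ⟨[], [], Relation.ReflTransGen.refl, by simp [LeftAbsorbed],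
      by simp [LeftAbsorbed], by simp [WCommute], by simp [WCommute]⟩
  | cons t u ih =>
    intro h
    obtain ⟨u1, u2, he, h1, h2, hc1, hc2⟩ :=
      ih (fun r hr => h r (List.mem_cons_of_mem _ hr))
    rcases letterLeftAbsorbed_append (h t (List.mem_cons_self)) with ht | ⟨ht2, htv1⟩
    · refine ⟨t :: u1, u2, ?_, ?_, h2, hc1, ?_⟩
      · exact wequiv_cons t he
      · intro r hr
        rcases List.mem_cons.mp hr with rfl | hr
        · exact ht
        · exact h1 r hr
      · intro r hr x hx
        rcases List.mem_cons.mp hx with rfl | hx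
        · obtain ⟨a, b, s, heq, hsub, _⟩ := ht
          have hs : s ∈ v1 := heq ▸ List.mem_append_right _ (List.mem_cons_self)
          exact lcommute_symm (lcommute_of_subset (lcommute_symm (hc1 r hr s hs)) hsub)
        · exact hc2 r hr x hx
    · have htu1 : ∀ r ∈ u1, LCommute G t r := by
        intro r hr
        obtain ⟨a, b, s, heq, hsub, _⟩ := h1 r hr
        have hs : s ∈ v1 := heq ▸ List.mem_append_right _ (List.mem_cons_self)
        exact lcommute_symm (lcommute_of_subset (lcommute_symm (htv1 s hs)) hsub)
      refine ⟨u1, t :: u2, ?_, h1, ?_, ?_, ?_⟩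
      · exact (wequiv_cons t he).trans (wequiv_move u1 u2 htu1)
      · intro r hr
        rcases List.mem_cons.mp hr with rfl | hr
        · exact ht2
        · exact h2 r hr
      · intro r hr x hx
        rcases List.mem_cons.mp hr with rfl | hr
        · exact htv1 x hx
        · exact hc1 r hr x hx
      · intro r hr x hx
        rcases List.mem_cons.mp hr with rfl | hr
        · exact htu1 x hx
        · exact hc2 r hr x hx

end Aux

/-- If a reduced word `u` is left-absorbed by `v₁·v₂`, then `u ≈ u₁·u₂` where
`u₁` is left-absorbed by `v₁`, `u₂` is left-absorbed by `v₂`, and `u₂`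
commutes with `v₁` (hence also with `u₁`). -/
theorem leftAbsorbed_append_decomp (G : SimpleGraph V) (u v1 v2 : Word G)
    (hu : WIsReduced G u) (h : LeftAbsorbed G u (v1 ++ v2)) :
    ∃ u1 u2 : Word G, WEquiv G u (u1 ++ u2) ∧
      LeftAbsorbed G u1 v1 ∧ LeftAbsorbed G u2 v2 ∧
      WCommute G u2 v1 ∧ WCommute G u2 u1 := by
  exact leftAbsorbed_decomp_aux G v1 v2 u h
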